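/- Let r be a rational number with r < −3. Then r + 3 < 0, and if [r_0, ..., r_n] is the unique admissible NCF expansion of r + 3, then |r_0 (r_1+1) ⋯ (r_n+1)| = Ψ(r). -/

import Mathlib

/-- The negative continued fraction (NCF) value of a list of integers:
`ncfVal [rₙ] = rₙ` and `ncfVal (rₖ :: l) = rₖ - 1 / ncfVal l`.
(Junk value `0` for the empty list; recall division by zero in `ℚ` is `0`,
so the value is "well defined" precisely when all proper tails have nonzero value.) -/
def ncfVal : List ℤ → ℚ
  | [] => 0
  | [r] => (r : ℚ)
  | r :: s :: l => (r : ℚ) - 1 / ncfVal (s :: l)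

/-- A list `[r₀, …, rₙ]` is admissible if `r₀ ≤ -1` and `rᵢ ≤ -2` for `1 ≤ i ≤ n`. -/
def Admissible : List ℤ → Prop
  | [] => False
  | r :: l => r ≤ -1 ∧ ∀ s ∈ l, s ≤ -2

/-- `ncfWeight [r₀, …, rₙ] = |r₀ (r₁+1) ⋯ (rₙ+1)|`. -/
def ncfWeight : List ℤ → ℤ
  | [] => 0
  | r :: l => |r * (l.map (· + 1)).prod|

lemma ncfVal_range : ∀ (a : ℤ) (M : List ℤ), (∀ s ∈ M, s ≤ -2) →
    (a : ℚ) ≤ ncfVal (a :: M) ∧ ncfVal (a :: M) < a + 1 ∧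
      (M ≠ [] → (a : ℚ) < ncfVal (a :: M)) := by
  intro a M
  induction M generalizing a with
  | nil => intro _; simp [ncfVal]
  | cons b l ih =>
    intro h
    have hb : b ≤ -2 := h b (by simp)
    have hl : ∀ s ∈ l, s ≤ -2 := fun s hs => h s (by simp [hs])
    obtain ⟨h1, h2, _⟩ := ih b hl
    have hbq : (b : ℚ) + 1 ≤ -1 := by
      have : (b : ℚ) ≤ -2 := by exact_mod_cast hb
      linarith
    have hw : ncfVal (b :: l) < -1 := lt_of_lt_of_le h2 hbq
    have hw0 : ncfVal (b :: l) < 0 := by linarith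
    have hlo : -1 < 1 / ncfVal (b :: l) := by
      rw [lt_div_iff_of_neg hw0]; linarith
    have hhi : 1 / ncfVal (b :: l) < 0 := div_neg_of_pos_of_neg one_pos hw0
    have hval : ncfVal (a :: b :: l) = (a : ℚ) - 1 / ncfVal (b :: l) := rfl
    refine ⟨?_, ?_, fun _ => ?_⟩ <;> rw [hval] <;> linarith

lemma ncf_unique : ∀ (L L' : List ℤ), Admissible L → Admissible L' →
    ncfVal L = ncfVal L' → L = L' := by
  intro L
  induction L with
  | nil => intro L' hL; exact absurd hL id
  | cons a M ih =>
    intro L' hL hL' hv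
    match L' with
    | [] => exact absurd hL' id
    | a' :: M' =>
      obtain ⟨ha, hM⟩ := hL
      obtain ⟨ha', hM'⟩ := hL'
      obtain ⟨r1, r2, r3⟩ := ncfVal_range a M hM
      obtain ⟨r1', r2', r3'⟩ := ncfVal_range a' M' hM'
      rw [hv] at r1 r2
      have haa : a = a' := by
        have h1 : (a : ℚ) < (a' : ℚ) + 1 := lt_of_le_of_lt r1 r2'
        have h2 : (a' : ℚ) < (a : ℚ) + 1 := lt_of_le_of_lt r1' r2
        have h1' : a < a' + 1 := by exact_mod_cast h1
        have h2' : a' < a + 1 := by exact_mod_cast h2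
        omega
      subst haa
      match M, M' with
      | [], [] => rfl
      | [], b' :: l' =>
        exfalso
        have hw' : ncfVal (b' :: l') < -1 := by
          have hb' : b' ≤ -2 := hM' b' (by simp)
          obtain ⟨_, h2'', _⟩ := ncfVal_range b' l' (fun s hs => hM' s (by simp [hs]))
          have : (b' : ℚ) + 1 ≤ -1 := by
            have : (b' : ℚ) ≤ -2 := by exact_mod_cast hb'
            linarith
          linarith
        have hv1 : ncfVal [a] = (a : ℚ) := rfl
        have hv2 : ncfVal (a :: b' :: l') = (a : ℚ) - 1 / ncfVal (b' :: l') := rfl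
        rw [hv1, hv2] at hv
        have : 1 / ncfVal (b' :: l') = 0 := by linarith
        have : ncfVal (b' :: l') = 0 := by
          rcases div_eq_zero_iff.mp this with h | h
          · norm_num at h
          · exact h
        linarith
      | b :: l, [] =>
        exfalso
        have hw : ncfVal (b :: l) < -1 := by
          have hb : b ≤ -2 := hM b (by simp)
          obtain ⟨_, h2'', _⟩ := ncfVal_range b l (fun s hs => hM s (by simp [hs]))
          have : (b : ℚ) + 1 ≤ -1 := by
            have : (b : ℚ) ≤ -2 := by exact_mod_cast hb
            linarith
          linarith
        have hv1 : ncfVal [a] = (a : ℚ) := rfl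
        have hv2 : ncfVal (a :: b :: l) = (a : ℚ) - 1 / ncfVal (b :: l) := rfl
        rw [hv1, hv2] at hv
        have : 1 / ncfVal (b :: l) = 0 := by linarith
        have : ncfVal (b :: l) = 0 := by
          rcases div_eq_zero_iff.mp this with h | h
          · norm_num at h
          · exact h
        linarith
      | b :: l, b' :: l' =>
        have hw : ncfVal (b :: l) < -1 := by
          have hb : b ≤ -2 := hM b (by simp)
          obtain ⟨_, h2'', _⟩ := ncfVal_range b l (fun s hs => hM s (by simp [hs]))
          have : (b : ℚ) + 1 ≤ -1 := by
            have : (b : ℚ) ≤ -2 := by exact_mod_cast hb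
            linarith
          linarith
        have hw' : ncfVal (b' :: l') < -1 := by
          have hb' : b' ≤ -2 := hM' b' (by simp)
          obtain ⟨_, h2'', _⟩ := ncfVal_range b' l' (fun s hs => hM' s (by simp [hs]))
          have : (b' : ℚ) + 1 ≤ -1 := by
            have : (b' : ℚ) ≤ -2 := by exact_mod_cast hb'
            linarith
          linarith
        have hv2 : ncfVal (a :: b :: l) = (a : ℚ) - 1 / ncfVal (b :: l) := rfl
        have hv2' : ncfVal (a :: b' :: l') = (a : ℚ) - 1 / ncfVal (b' :: l') := rfl
        rw [hv2, hv2'] at hv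
        have hdd : 1 / ncfVal (b :: l) = 1 / ncfVal (b' :: l') := by linarith
        have hww : ncfVal (b :: l) = ncfVal (b' :: l') := by
          rw [← one_div_one_div (ncfVal (b :: l)), hdd, one_div_one_div]
        have hAd : Admissible (b :: l) :=
          ⟨by have := hM b (by simp); omega, fun s hs => hM s (by simp [hs])⟩
        have hAd' : Admissible (b' :: l') :=
          ⟨by have := hM' b' (by simp); omega, fun s hs => hM' s (by simp [hs])⟩
        rw [ih (b' :: l') hAd hAd' hww]

lemma ncfVal_shift (b : ℤ) (l : List ℤ) :
    ncfVal ((b + 1) :: l) = ncfVal (b :: l) + 1 := by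
  cases l with
  | nil => simp [ncfVal]
  | cons c m =>
    have h1 : ncfVal ((b + 1) :: c :: m) = ((b + 1 : ℤ) : ℚ) - 1 / ncfVal (c :: m) := rfl
    have h2 : ncfVal (b :: c :: m) = (b : ℚ) - 1 / ncfVal (c :: m) := rfl
    rw [h1, h2]; push_cast; ring

lemma key (k : ℕ) : ∀ (L : List ℤ) (s : ℚ), Admissible L → (k : ℚ) < s →
    s ≤ (k : ℚ) + 1 → ncfVal L = -1 / s →
    ∃ L', Admissible L' ∧ ncfVal L' = -1 / (s - k) ∧ ncfWeight L' = ncfWeight L := by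
  induction k with
  | zero => intro L s hL _ _ hv; exact ⟨L, hL, by simpa using hv, rfl⟩
  | succ k ih =>
    intro L s hL hks hsk hv
    have hk1 : (1 : ℚ) < s := by
      have : ((k : ℚ) + 1) < s := by push_cast at hks; linarith
      have : (0 : ℚ) ≤ k := by positivity
      linarith
    have hs0 : (0 : ℚ) < s := by linarith
    have hu1 : -1 < -1 / s := by
      have h : 1 / s < 1 := (div_lt_one hs0).mpr hk1
      have : -1 / s = -(1 / s) := by ring
      linarith [this ▸ neg_lt_neg h]
    have hu0 : -1 / s < 0 := div_neg_of_neg_of_pos (by norm_num) hs0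
    match L with
    | [] => exact absurd hL id
    | a :: M =>
      obtain ⟨ha, hM⟩ := hL
      obtain ⟨r1, r2, _⟩ := ncfVal_range a M hM
      rw [hv] at r1 r2
      have haeq : a = -1 := by
        have h1 : (a : ℚ) < 0 := lt_of_le_of_lt r1 hu0
        have h2 : (-1 : ℚ) < (a : ℚ) + 1 := lt_trans hu1 r2
        have h1' : a < 0 := by exact_mod_cast h1
        have h2' : (-1 : ℤ) < a + 1 := by exact_mod_cast h2
        omega
      subst haeq
      match M with
      | [] =>
        exfalso
        have : ncfVal [(-1 : ℤ)] = ((-1 : ℤ) : ℚ) := rfl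
        rw [this] at hv
        rw [← hv] at hu1
        norm_num at hu1
      | b :: l =>
        have hb : b ≤ -2 := hM b (by simp)
        have hl : ∀ t ∈ l, t ≤ -2 := fun t ht => hM t (by simp [ht])
        have hw : ncfVal (b :: l) < -1 := by
          obtain ⟨_, h2, _⟩ := ncfVal_range b l hl
          have : (b : ℚ) + 1 ≤ -1 := by
            have : (b : ℚ) ≤ -2 := by exact_mod_cast hb
            linarith
          linarith
        have hw0 : ncfVal (b :: l) ≠ 0 := by intro h; rw [h] at hw; norm_num at hw
        have hveq : ncfVal ((-1 : ℤ) :: b :: l) = ((-1 : ℤ) : ℚ) - 1 / ncfVal (b :: l) := rfl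
        rw [hveq] at hv
        set w := ncfVal (b :: l) with hwdef
        -- value of the peeled list
        have hval1 : ncfVal ((b + 1) :: l) = -1 / (s - 1) := by
          rw [ncfVal_shift]
        -- derive w + 1 = -1/(s-1)
          have hs1 : s - 1 ≠ 0 := by intro h; rw [sub_eq_zero] at h; rw [← h] at hk1; norm_num at hk1
          have hsne : s ≠ 0 := ne_of_gt hs0
          field_simp at hv ⊢
          rw [← hwdef]; push_cast at hv ⊢; linarith [hv]
        have hAd1 : Admissible ((b + 1) :: l) := ⟨by omega, hl⟩
        obtain ⟨L', hL', hv', hwt⟩ := ih ((b + 1) :: l) (s - 1) hAd1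
          (by push_cast at hks ⊢; linarith)
          (by push_cast at hsk ⊢; linarith)
          hval1
        refine ⟨L', hL', ?_, ?_⟩
        · rw [hv']; congr 1; push_cast; ring
        · rw [hwt]
          show ncfWeight ((b + 1) :: l) = ncfWeight ((-1 : ℤ) :: b :: l)
          simp only [ncfWeight, List.map_cons, List.prod_cons]
          rw [abs_mul, abs_mul, abs_mul]
          norm_num

/-- The function `Φ` of the paper: for `x = p/q ∈ (0,1]`, `Φ(x)` is the weight
`|r₀ (r₁+1) ⋯ (rₙ+1)|` of the unique admissible list with NCF value `-q/p = -1/x`,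
extended to all of `ℚ` by `Φ(r+1) = Φ(r)`; here `x = r - ⌈r⌉ + 1 ∈ (0,1]`. -/
noncomputable def Phi (r : ℚ) : ℤ :=
  letI := Classical.propDecidable
    (∃ L : List ℤ, Admissible L ∧ ncfVal L = -1 / (r - (⌈r⌉ : ℚ) + 1))
  if h : ∃ L : List ℤ, Admissible L ∧ ncfVal L = -1 / (r - (⌈r⌉ : ℚ) + 1) then
    ncfWeight h.choose
  else 0

/-- The function `Ψ` of the paper. -/
noncomputable def Psi (r : ℚ) : ℤ :=
  if -3 ≤ r then 0 else Phi (-1 / (r + 3))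

/-- For rational `r < -3`, `r + 3 < 0`, and the weight
`|r₀ (r₁+1) ⋯ (rₙ+1)|` of the unique admissible NCF expansion `[r₀, …, rₙ]` of
`r + 3` equals `Ψ(r)`. -/
theorem ncf_weight_eq_psi_of_lt_neg_three (r : ℚ) (hr : r < -3) :
    r + 3 < 0 ∧
    ∀ L : List ℤ, Admissible L → ncfVal L = r + 3 →
      ncfWeight L = Psi r := by
  have h3 : r + 3 < 0 := by linarith
  have h3' : r + 3 ≠ 0 := ne_of_lt h3
  refine ⟨h3, fun L hL hv => ?_⟩
  set s : ℚ := -1 / (r + 3) with hs_def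
  have hs : 0 < s := by
    rw [hs_def]
    exact div_pos_iff.mpr (Or.inr ⟨by norm_num, by linarith⟩)
  have hv' : ncfVal L = -1 / s := by
    rw [hv, hs_def]; field_simp
  have hceil : (0 : ℤ) < ⌈s⌉ := Int.ceil_pos.mpr hs
  set k : ℕ := (⌈s⌉ - 1).toNat with hk
  have hki : (k : ℤ) = ⌈s⌉ - 1 := by
    rw [hk]; exact Int.toNat_of_nonneg (by omega)
  have hk' : (k : ℚ) = (⌈s⌉ : ℚ) - 1 := by exact_mod_cast hki
  have h1 : (k : ℚ) < s := by
    rw [hk']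
    have := Int.ceil_lt_add_one s
    linarith
  have h2 : s ≤ (k : ℚ) + 1 := by
    rw [hk']
    have := Int.le_ceil s
    linarith
  obtain ⟨L', hL', hv'', hw⟩ := key k L s hL h1 h2 hv'
  have hEx : ∃ L'' : List ℤ, Admissible L'' ∧ ncfVal L'' = -1 / (s - (⌈s⌉ : ℚ) + 1) :=
    ⟨L', hL', by rw [hv'']; congr 1; rw [hk']; ring⟩
  have hPsi : Psi r = Phi s := by rw [Psi, if_neg (by linarith), hs_def]
  rw [hPsi, Phi, dif_pos hEx]
  obtain ⟨hA, hV⟩ := hEx.choose_spec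
  have heq : hEx.choose = L' :=
    ncf_unique _ _ hA hL' (by rw [hV, hv'', hk']; ring_nf)
  rw [heq, hw]
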